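/- Suppose real sequences R_n, x_n, r_n, y_n, β_n and a constant γ satisfy: β_{n+1}(R_{n+1}−x_{n+1}) − β_n(R_{n-1}−x_{n-1}) = (t−α_n)(r_{n+1}−r_n−y_{n+1}+y_n−1), and (t−α_n)(R_n−x_n) = r_{n+1}+r_n−y_{n+1}−y_n−2n−1−γ, for all n ≥ 0, with β_0(R_0−x_0)(R_{-1}−x_{-1}) = 0, r_0 = 0, y_0 = 0. Then β_n (R_n − x_n)(R_{n-1} − x_{n-1}) = (r_n − y_n − n − γ)(r_n − y_n − n) for all n ≥ 0. -/

import Mathlib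

/-- Telescoped identity:
`β_n (R_n − x_n)(R_{n-1} − x_{n-1}) = (r_n − y_n − n − γ)(r_n − y_n − n)`. -/
theorem beta_Rx_Rx_identity (t γ : ℝ) (R x r y αs βs : ℤ → ℝ)
    (h1 : ∀ n : ℤ, 0 ≤ n →
      βs (n + 1) * (R (n + 1) - x (n + 1)) - βs n * (R (n - 1) - x (n - 1))
        = (t - αs n) * (r (n + 1) - r n - y (n + 1) + y n - 1))
    (h2 : ∀ n : ℤ, 0 ≤ n →
      (t - αs n) * (R n - x n)
        = r (n + 1) + r n - y (n + 1) - y n - 2 * (n : ℝ) - 1 - γ)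
    (h0 : βs 0 * (R 0 - x 0) * (R (-1) - x (-1)) = 0)
    (hr0 : r 0 = 0) (hy0 : y 0 = 0) :
    ∀ n : ℤ, 0 ≤ n →
      βs n * (R n - x n) * (R (n - 1) - x (n - 1))
        = (r n - y n - (n : ℝ) - γ) * (r n - y n - (n : ℝ)) := by
  intro n hn
  refine Int.le_induction (motive := fun n _ => βs n * (R n - x n) * (R (n - 1) - x (n - 1))
        = (r n - y n - (n : ℝ) - γ) * (r n - y n - (n : ℝ))) ?_ ?_ n hn
  · norm_num [hr0, hy0, h0]
  · intro n hn ih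
    have e1 := h1 n hn
    have e2 := h2 n hn
    have hsub : (n : ℤ) + 1 - 1 = n := by ring
    rw [hsub]
    push_cast
    linear_combination (R n - x n) * e1
      + (r (n + 1) - r n - y (n + 1) + y n - 1) * e2 + ih
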